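/- Each Mandelbrot matrix M_n (n ≥ 2) is invertible, and every entry of M_n^{-1} lies in {-1, 0, 1}; moreover the bottom-left entry of M_n^{-1} is -1. -/

import Mathlib

open Matrix

/-- Dimension of the Mandelbrot matrix `M_{k+2}`: `dm 0 = 1`, `dm (k+1) = 2 * dm k + 1`. -/
def dm : ℕ → ℕ
  | 0 => 1
  | k + 1 => 2 * dm k + 1

theorem dm_pos (k : ℕ) : 0 < dm k := by
  induction k with
  | zero => decide
  | succ k ih => unfold dm; omega

/-- Row vector `X_k = e_{d_k}ᵀ` (last standard basis row vector). -/
def mandX (k : ℕ) : Matrix (Fin 1) (Fin (dm k)) ℤ :=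
  Matrix.of fun _ j => if (j : ℕ) = dm k - 1 then 1 else 0

/-- Column vector `Y_k = e_1` (first standard basis column vector). -/
def mandY (k : ℕ) : Matrix (Fin (dm k)) (Fin 1) ℤ :=
  Matrix.of fun i _ => if (i : ℕ) = 0 then 1 else 0

/-- The Mandelbrot matrices: `mand 0 = M_2 = [-1]`, and `mand (k+1) = M_{k+3}` glues two
copies of `mand k` per the algebraic linearization with `c_0 = d_0 = 1`. -/
def mand : (k : ℕ) → Matrix (Fin (dm k)) (Fin (dm k)) ℤ
  | 0 => !![-1]
  | k + 1 =>
    Matrix.reindex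
      (((Equiv.sumCongr finSumFinEquiv (Equiv.refl (Fin (dm k)))).trans
          finSumFinEquiv).trans (finCongr (by simp [dm]; omega)))
      (((Equiv.sumCongr finSumFinEquiv (Equiv.refl (Fin (dm k)))).trans
          finSumFinEquiv).trans (finCongr (by simp [dm]; omega)))
      (Matrix.fromBlocks
        (Matrix.fromBlocks (mand k) 0 (-(mandX k)) 0)
        (Matrix.fromRows (-(mandY k * mandX k)) (0 : Matrix (Fin 1) (Fin (dm k)) ℤ))
        (Matrix.fromCols (0 : Matrix (Fin (dm k)) (Fin (dm k)) ℤ) (-(mandY k)))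
        (mand k))

lemma mandX_mul_apply {k n : ℕ} (A : Matrix (Fin (dm k)) (Fin n) ℤ) (x : Fin 1) (j : Fin n) :
    (mandX k * A) x j = A ⟨dm k - 1, Nat.sub_lt (dm_pos k) Nat.one_pos⟩ j := by
  rw [Matrix.mul_apply, Finset.sum_eq_single (⟨dm k - 1, Nat.sub_lt (dm_pos k) Nat.one_pos⟩ :
    Fin (dm k))]
  · simp [mandX]
  · intro b _ hb
    rw [mandX, Matrix.of_apply, if_neg, zero_mul]
    exact fun h => hb (Fin.ext h)
  · simp

lemma mul_mandY_apply {k n : ℕ} (A : Matrix (Fin n) (Fin (dm k)) ℤ) (i : Fin n) (y : Fin 1) :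
    (A * mandY k) i y = A i ⟨0, dm_pos k⟩ := by
  rw [Matrix.mul_apply, Finset.sum_eq_single (⟨0, dm_pos k⟩ : Fin (dm k))]
  · simp [mandY]
  · intro b _ hb
    rw [mandY, Matrix.of_apply, if_neg, mul_zero]
    exact fun h => hb (Fin.ext h)
  · simp

section Step

variable {d : ℕ}

lemma myFromRows_add {m₁ m₂ n : Type*} (A₁ : Matrix m₁ n ℤ) (A₂ : Matrix m₂ n ℤ)
    (B₁ : Matrix m₁ n ℤ) (B₂ : Matrix m₂ n ℤ) :
    fromRows A₁ A₂ + fromRows B₁ B₂ = fromRows (A₁ + B₁) (A₂ + B₂) := by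
  ext (i | i) j <;> simp [fromRows_apply_inl, fromRows_apply_inr]

lemma myNegAddCancelComm {G : Type*} [AddCommGroup G] (a b : G) : -a + (b + a) = b := by abel

lemma step_mul (M K : Matrix (Fin d) (Fin d) ℤ) (X : Matrix (Fin 1) (Fin d) ℤ)
    (Y : Matrix (Fin d) (Fin 1) ℤ) (hMK : M * K = 1) (hXKY : X * K * Y = -1) :
    (fromBlocks (fromBlocks M 0 (-X) 0)
        (fromRows (-(Y * X)) (0 : Matrix (Fin 1) (Fin d) ℤ))
        (fromCols (0 : Matrix (Fin d) (Fin d) ℤ) (-Y)) M) *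
    (fromBlocks (fromBlocks (K + K * Y * (X * K)) (K * Y) (-(X * K)) (-1))
        (fromRows (0 : Matrix (Fin d) (Fin d) ℤ) (X * K))
        (fromCols (-(K * Y * (X * K))) (-(K * Y))) (K + K * Y * (X * K))) = 1 := by
  have hMW : ∀ {n : ℕ} (W : Matrix (Fin d) (Fin n) ℤ), M * (K * W) = W := by
    intro n W; rw [← Matrix.mul_assoc, hMK, Matrix.one_mul]
  have hXKY' : X * (K * Y) = -1 := by rw [← Matrix.mul_assoc]; exact hXKY
  have hXW : ∀ {n : ℕ} (W : Matrix (Fin 1) (Fin n) ℤ), X * (K * (Y * W)) = -W := by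
    intro n W
    rw [← Matrix.mul_assoc, ← Matrix.mul_assoc, hXKY, Matrix.neg_mul, Matrix.one_mul]
  rw [fromBlocks_multiply]
  simp only [fromBlocks_multiply, fromRows_mul, mul_fromCols, fromCols_mul_fromRows,
    fromRows_mul_fromCols, fromCols_mul_fromBlocks, fromBlocks_mul_fromRows,
    fromRows_fromCols_eq_fromBlocks, Matrix.mul_zero, Matrix.zero_mul, Matrix.mul_neg,
    Matrix.neg_mul, neg_neg, add_zero, zero_add, Matrix.mul_add, Matrix.mul_one,
    Matrix.mul_assoc, hMK, hMW, hXW, hXKY', neg_zero]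
  simp only [fromCols_fromRows_eq_fromBlocks, fromBlocks_neg, ← fromRows_neg,
    ← fromCols_neg, neg_zero, fromBlocks_add, myFromRows_add, add_neg_cancel,
    neg_add_cancel, add_neg_cancel_left, neg_add_cancel_left, add_neg_cancel_right,
    neg_add_cancel_right, myNegAddCancelComm, add_zero, zero_add, fromRows_zero,
    fromBlocks_zero, fromBlocks_one]

end Step

section Step

variable {d : ℕ}

lemma memS_neg {a : ℤ} (ha : a ∈ ({-1, 0, 1} : Set ℤ)) : -a ∈ ({-1, 0, 1} : Set ℤ) := by
  simp only [Set.mem_insert_iff, Set.mem_singleton_iff] at *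
  rcases ha with rfl | rfl | rfl <;> norm_num

lemma memS_mul {a b : ℤ} (ha : a ∈ ({-1, 0, 1} : Set ℤ)) (hb : b ∈ ({-1, 0, 1} : Set ℤ)) :
    a * b ∈ ({-1, 0, 1} : Set ℤ) := by
  simp only [Set.mem_insert_iff, Set.mem_singleton_iff] at *
  rcases ha with rfl | rfl | rfl <;> rcases hb with rfl | rfl | rfl <;> norm_num

lemma step_BY (K : Matrix (Fin d) (Fin d) ℤ) (X : Matrix (Fin 1) (Fin d) ℤ)
    (Y : Matrix (Fin d) (Fin 1) ℤ) (hXKY : X * K * Y = -1) :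
    (fromBlocks (fromBlocks (K + K * Y * (X * K)) (K * Y) (-(X * K)) (-1))
        (fromRows (0 : Matrix (Fin d) (Fin d) ℤ) (X * K))
        (fromCols (-(K * Y * (X * K))) (-(K * Y))) (K + K * Y * (X * K))) *
      (fromRows (fromRows Y (0 : Matrix (Fin 1) (Fin 1) ℤ)) (0 : Matrix (Fin d) (Fin 1) ℤ)) =
      fromRows (fromRows 0 1) (K * Y) := by
  have hXKY' : X * (K * Y) = -1 := by rw [← Matrix.mul_assoc]; exact hXKY
  simp only [fromBlocks_mul_fromRows, fromRows_mul, fromCols_mul_fromRows, Matrix.mul_zero,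
    Matrix.zero_mul, Matrix.mul_neg, Matrix.neg_mul, neg_neg, add_zero, zero_add,
    Matrix.add_mul, Matrix.mul_one, Matrix.one_mul, Matrix.mul_assoc, hXKY', neg_zero,
    add_neg_cancel]

lemma step_XB (K : Matrix (Fin d) (Fin d) ℤ) (X : Matrix (Fin 1) (Fin d) ℤ)
    (Y : Matrix (Fin d) (Fin 1) ℤ) (hXKY : X * K * Y = -1) :
    (fromCols (fromCols (0 : Matrix (Fin 1) (Fin d) ℤ) (0 : Matrix (Fin 1) (Fin 1) ℤ)) X) *
    (fromBlocks (fromBlocks (K + K * Y * (X * K)) (K * Y) (-(X * K)) (-1))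
        (fromRows (0 : Matrix (Fin d) (Fin d) ℤ) (X * K))
        (fromCols (-(K * Y * (X * K))) (-(K * Y))) (K + K * Y * (X * K))) =
      fromCols (fromCols (X * K) 1) 0 := by
  have hXKY' : X * (K * Y) = -1 := by rw [← Matrix.mul_assoc]; exact hXKY
  have hXW : ∀ {n : ℕ} (W : Matrix (Fin 1) (Fin n) ℤ), X * (K * (Y * W)) = -W := by
    intro n W
    rw [← Matrix.mul_assoc, ← Matrix.mul_assoc, hXKY, Matrix.neg_mul, Matrix.one_mul]
  simp only [fromCols_mul_fromBlocks, fromCols_mul_fromRows, mul_fromCols,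
    Matrix.mul_zero, Matrix.zero_mul, Matrix.mul_neg, Matrix.neg_mul, neg_neg, add_zero,
    zero_add, Matrix.mul_add, Matrix.mul_one, Matrix.one_mul, Matrix.mul_assoc, hXKY',
    hXW, neg_zero, add_neg_cancel, fromCols_zero]

lemma step_XBY (K : Matrix (Fin d) (Fin d) ℤ) (X : Matrix (Fin 1) (Fin d) ℤ)
    (Y : Matrix (Fin d) (Fin 1) ℤ) (hXKY : X * K * Y = -1) :
    (fromCols (fromCols (0 : Matrix (Fin 1) (Fin d) ℤ) (0 : Matrix (Fin 1) (Fin 1) ℤ)) X) *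
    (fromBlocks (fromBlocks (K + K * Y * (X * K)) (K * Y) (-(X * K)) (-1))
        (fromRows (0 : Matrix (Fin d) (Fin d) ℤ) (X * K))
        (fromCols (-(K * Y * (X * K))) (-(K * Y))) (K + K * Y * (X * K))) *
      (fromRows (fromRows Y (0 : Matrix (Fin 1) (Fin 1) ℤ)) (0 : Matrix (Fin d) (Fin 1) ℤ)) =
      -1 := by
  rw [step_XB K X Y hXKY]
  simp only [fromCols_mul_fromRows, Matrix.zero_mul, add_zero, Matrix.mul_zero,
    Matrix.one_mul, zero_add, hXKY]

lemma step_mem (K : Matrix (Fin d) (Fin d) ℤ) (X : Matrix (Fin 1) (Fin d) ℤ)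
    (Y : Matrix (Fin d) (Fin 1) ℤ)
    (hK : ∀ i j, K i j ∈ ({-1, 0, 1} : Set ℤ))
    (hKcr : ∀ i j, (K + K * Y * (X * K)) i j ∈ ({-1, 0, 1} : Set ℤ))
    (hc : ∀ i j, (K * Y) i j ∈ ({-1, 0, 1} : Set ℤ))
    (hr : ∀ i j, (X * K) i j ∈ ({-1, 0, 1} : Set ℤ)) :
    ∀ s t, (fromBlocks (fromBlocks (K + K * Y * (X * K)) (K * Y) (-(X * K)) (-1))
        (fromRows (0 : Matrix (Fin d) (Fin d) ℤ) (X * K))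
        (fromCols (-(K * Y * (X * K))) (-(K * Y))) (K + K * Y * (X * K))) s t ∈
      ({-1, 0, 1} : Set ℤ) := by
  have hcr : ∀ i j, (K * Y * (X * K)) i j ∈ ({-1, 0, 1} : Set ℤ) := by
    intro i j
    rw [Matrix.mul_apply, Fin.sum_univ_one]
    exact memS_mul (hc i 0) (hr 0 j)
  rintro ((s | s) | s) ((t | t) | t) <;>
    simp only [fromBlocks_apply₁₁, fromBlocks_apply₁₂, fromBlocks_apply₂₁, fromBlocks_apply₂₂,
      fromRows_apply_inl, fromRows_apply_inr, fromCols_apply_inl, fromCols_apply_inr,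
      Matrix.neg_apply, Matrix.zero_apply, Matrix.one_apply]
  · exact hKcr s t
  · exact hc s t
  · simp
  · exact memS_neg (hr s t)
  · simp [Subsingleton.elim s t]
  · exact hr s t
  · exact memS_neg (hcr s t)
  · exact memS_neg (hc s t)
  · exact hKcr s t

lemma step_mem2 (K : Matrix (Fin d) (Fin d) ℤ) (X : Matrix (Fin 1) (Fin d) ℤ)
    (Y : Matrix (Fin d) (Fin 1) ℤ)
    (hK : ∀ i j, K i j ∈ ({-1, 0, 1} : Set ℤ))
    (hKcr : ∀ i j, (K + K * Y * (X * K)) i j ∈ ({-1, 0, 1} : Set ℤ))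
    (hc : ∀ i j, (K * Y) i j ∈ ({-1, 0, 1} : Set ℤ))
    (hr : ∀ i j, (X * K) i j ∈ ({-1, 0, 1} : Set ℤ)) :
    ∀ s t : (Fin d ⊕ Fin 1) ⊕ Fin d,
      ((fromBlocks (fromBlocks (K + K * Y * (X * K)) (K * Y) (-(X * K)) (-1))
        (fromRows (0 : Matrix (Fin d) (Fin d) ℤ) (X * K))
        (fromCols (-(K * Y * (X * K))) (-(K * Y))) (K + K * Y * (X * K))) +
      (fromRows (fromRows (0 : Matrix (Fin d) (Fin 1) ℤ) (1 : Matrix (Fin 1) (Fin 1) ℤ))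
          (K * Y)) *
        (fromCols (fromCols (X * K) (1 : Matrix (Fin 1) (Fin 1) ℤ))
          (0 : Matrix (Fin 1) (Fin d) ℤ))) s t ∈
      ({-1, 0, 1} : Set ℤ) := by
  have hcr : ∀ i j, (K * Y * (X * K)) i j = (K * Y) i 0 * (X * K) 0 j := by
    intro i j; rw [Matrix.mul_apply, Fin.sum_univ_one]
  intro s t
  rw [Matrix.add_apply, Matrix.mul_apply, Fin.sum_univ_one]
  rcases s with (s | s) | s <;> rcases t with (t | t) | t <;>
    simp only [fromBlocks_apply₁₁, fromBlocks_apply₁₂, fromBlocks_apply₂₁, fromBlocks_apply₂₂,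
      fromRows_apply_inl, fromRows_apply_inr, fromCols_apply_inl, fromCols_apply_inr,
      Matrix.neg_apply, Matrix.zero_apply, Matrix.add_apply, hcr]
  · simpa [Matrix.add_apply, hcr] using hKcr s t
  · simpa using hc s t
  · simp
  · simp [Subsingleton.elim s (0 : Fin 1), Matrix.one_apply]
  · simp [Subsingleton.elim s (0 : Fin 1), Subsingleton.elim t (0 : Fin 1), Matrix.one_apply,
      Matrix.neg_apply]
  · simpa using hr s t
  · simp [hcr]
  · simp [Subsingleton.elim t (0 : Fin 1), Matrix.one_apply]
  · simpa [Matrix.add_apply, hcr] using hKcr s t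

end Step

theorem mand_key (k : ℕ) :
    ∃ B : Matrix (Fin (dm k)) (Fin (dm k)) ℤ,
      mand k * B = 1 ∧
      (∀ i j, B i j ∈ ({-1, 0, 1} : Set ℤ)) ∧
      (∀ i j, (B + B * mandY k * (mandX k * B)) i j ∈ ({-1, 0, 1} : Set ℤ)) ∧
      mandX k * B * mandY k = -1 := by
  induction k with
  | zero =>
    have hone : ∀ i : Fin (dm 0), i = ⟨0, dm_pos 0⟩ := by
      intro i
      have h1 : dm 0 = 1 := rfl
      have := i.isLt
      exact Fin.ext (by omega)
    have hm0 : mand 0 = (-1 : Matrix (Fin (dm 0)) (Fin (dm 0)) ℤ) := by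
      ext i j
      rw [hone i, hone j]
      simp [mand]
      rfl
    refine ⟨-1, ?_, ?_, ?_, ?_⟩
    · rw [hm0]
      simp
    · intro i j
      simp [Matrix.one_apply, hone i, hone j]
    · intro i j
      rw [Matrix.add_apply, Matrix.mul_apply, Fin.sum_univ_one, mul_mandY_apply,
        mandX_mul_apply, hone i, hone j]
      simp [Matrix.one_apply, Fin.ext_iff, show dm 0 = 1 from rfl]
    · ext x y
      rw [mul_mandY_apply, mandX_mul_apply]
      simp [Matrix.one_apply, Fin.ext_iff, show dm 0 = 1 from rfl, Subsingleton.elim x y]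
  | succ k ih =>
    obtain ⟨K, hMK, hK, hKcr, hXKY⟩ := ih
    have hc : ∀ i j, (K * mandY k) i j ∈ ({-1, 0, 1} : Set ℤ) := fun i j => by
      rw [mul_mandY_apply]; exact hK _ _
    have hr : ∀ i j, (mandX k * K) i j ∈ ({-1, 0, 1} : Set ℤ) := fun i j => by
      rw [mandX_mul_apply]; exact hK _ _
    set X := mandX k
    set Y := mandY k
    set BB := (fromBlocks (fromBlocks (K + K * Y * (X * K)) (K * Y) (-(X * K)) (-1))
        (fromRows (0 : Matrix (Fin (dm k)) (Fin (dm k)) ℤ) (X * K))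
        (fromCols (-(K * Y * (X * K))) (-(K * Y))) (K + K * Y * (X * K))) with hBB
    set e : ((Fin (dm k) ⊕ Fin 1) ⊕ Fin (dm k)) ≃ Fin (dm (k + 1)) :=
      ((Equiv.sumCongr finSumFinEquiv (Equiv.refl (Fin (dm k)))).trans
          finSumFinEquiv).trans (finCongr (by simp [dm]; omega)) with he
    have hmand : mand (k + 1) =
        (Matrix.fromBlocks
          (Matrix.fromBlocks (mand k) 0 (-X) 0)
          (Matrix.fromRows (-(Y * X)) (0 : Matrix (Fin 1) (Fin (dm k)) ℤ))
          (Matrix.fromCols (0 : Matrix (Fin (dm k)) (Fin (dm k)) ℤ) (-Y))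
          (mand k)).submatrix ⇑e.symm ⇑e.symm := rfl
    have he1 : ∀ a : Fin (dm k), ((e (Sum.inl (Sum.inl a))) : ℕ) = (a : ℕ) := by
      intro a; simp [he]
    have he2 : ∀ b : Fin 1, ((e (Sum.inl (Sum.inr b))) : ℕ) = dm k := by
      intro b; simp [he]
    have he3 : ∀ c : Fin (dm k), ((e (Sum.inr c)) : ℕ) = dm k + 1 + (c : ℕ) := by
      intro c; simp [he]
    have hY : mandY (k + 1) =
        (fromRows (fromRows Y (0 : Matrix (Fin 1) (Fin 1) ℤ))
          (0 : Matrix (Fin (dm k)) (Fin 1) ℤ)).submatrix ⇑e.symm id := by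
      ext i j
      obtain ⟨s, rfl⟩ := e.surjective i
      rw [Matrix.submatrix_apply, Equiv.symm_apply_apply]
      rcases s with (a | b) | c
      · simp [Y, mandY, he1]
      · have : ¬ ((e (Sum.inl (Sum.inr b)) : ℕ) = 0) := by
          rw [he2]; have := dm_pos k; omega
        simp [mandY, this]
      · have : ¬ ((e (Sum.inr c) : ℕ) = 0) := by
          rw [he3]; omega
        simp [mandY, this]
    have hX : mandX (k + 1) =
        (fromCols (fromCols (0 : Matrix (Fin 1) (Fin (dm k)) ℤ)
          (0 : Matrix (Fin 1) (Fin 1) ℤ)) X).submatrix id ⇑e.symm := by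
      have hd : dm (k + 1) - 1 = 2 * dm k := by simp [dm]
      ext i j
      obtain ⟨s, rfl⟩ := e.surjective j
      rw [Matrix.submatrix_apply, Equiv.symm_apply_apply]
      rcases s with (a | b) | c
      · have : ¬ ((e (Sum.inl (Sum.inl a)) : ℕ) = dm (k + 1) - 1) := by
          rw [he1, hd]; have := a.isLt; have := dm_pos k; omega
        simp [mandX, this]
      · have : ¬ ((e (Sum.inl (Sum.inr b)) : ℕ) = dm (k + 1) - 1) := by
          rw [he2, hd]; have := dm_pos k; omega
        simp [mandX, this]
      · have : ((e (Sum.inr c) : ℕ) = dm (k + 1) - 1) ↔ ((c : ℕ) = dm k - 1) := by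
          rw [he3, hd]; have := c.isLt; have := dm_pos k; omega
        simp [X, mandX, this]
    refine ⟨BB.submatrix ⇑e.symm ⇑e.symm, ?_, ?_, ?_, ?_⟩
    · rw [hmand, Matrix.submatrix_mul_equiv, step_mul (mand k) K X Y hMK hXKY,
        Matrix.submatrix_one_equiv]
    · intro i j
      exact step_mem K X Y hK hKcr hc hr _ _
    · intro i j
      rw [hY, hX, Matrix.submatrix_mul_equiv, Matrix.submatrix_mul_equiv,
        step_BY K X Y hXKY, step_XB K X Y hXKY,
        show (id : Fin 1 → Fin 1) = ⇑(Equiv.refl (Fin 1)) from rfl,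
        Matrix.submatrix_mul_equiv, Matrix.add_apply, Matrix.submatrix_apply,
        Matrix.submatrix_apply]
      have h9 := step_mem2 K X Y hK hKcr hc hr (e.symm i) (e.symm j)
      rw [Matrix.add_apply] at h9
      exact h9
    · rw [hY, hX, Matrix.submatrix_mul_equiv, Matrix.submatrix_mul_equiv,
        Matrix.submatrix_id_id, step_XBY K X Y hXKY]


/-- Mandelbrot matrices have the rhapsody property:  they are invertible, the inverse is
Bohemian with entries in `{-1, 0, 1}`, and the bottom-left entry of the inverse is `-1`. -/
theorem mandelbrot_rhapsody (k : ℕ) :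
    IsUnit (mand k).det ∧
    (∀ i j, (mand k)⁻¹ i j ∈ ({-1, 0, 1} : Set ℤ)) ∧
    (mand k)⁻¹ ⟨dm k - 1, Nat.sub_lt (dm_pos k) Nat.one_pos⟩ ⟨0, dm_pos k⟩ = -1 := by
  obtain ⟨B, hMB, hmem, -, hXBY⟩ := mand_key k
  have hinv : (mand k)⁻¹ = B := Matrix.inv_eq_right_inv hMB
  refine ⟨Matrix.isUnit_det_of_right_inverse hMB, ?_, ?_⟩
  · intro i j; rw [hinv]; exact hmem i j
  · have h2 : (mandX k * B * mandY k) 0 0 =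
        B ⟨dm k - 1, Nat.sub_lt (dm_pos k) Nat.one_pos⟩ ⟨0, dm_pos k⟩ := by
      rw [mul_mandY_apply, mandX_mul_apply]
    rw [hinv, ← h2, hXBY]
    simp [Matrix.one_apply]
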